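/- Let (X, ‖·‖) be a Banach space with three seminorms n₀ ≤ n₁ ≤ n₂ on a ball B around a point E, let 0 < δ < 1 and Q ≥ 1 with q := Q|λ| < 1 for some λ. Suppose (f_n)_{n≥1} is a sequence in X satisfying n₀(f₁), n₁(f₁), n₂(f₁) ≤ q, and the recursive bounds n₀(f_{n+1}) ≤ q·n₀(f_n), n₁(f_{n+1}) ≤ q·(n₀(f_n)^δ + n₁(f_n)), and n₂(f_{n+1}) ≤ q·(n₁(f_n)^δ + n₂(f_n)). Then for all n ≥ 1: n₀(f_n) ≤ q^n, n₁(f_n) ≤ B·q^{nδ}, and n₂(f_n) ≤ C·max{B^δ, 1}·q^{nδ²}, where B = q^{1-δ}/(1-q^{1-δ}) and C = q^{1-δ²}/(1-q^{1-δ²}). In particular, if n₂ dominates the Banach norm, then Σ f_n converges. -/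

import Mathlib

set_option maxHeartbeats 1000000 in
/-- Abstract iteration theorem: in a Banach space `X` with
three ordered seminorms `n₀ ≤ n₁ ≤ n₂`, if `q = Q|λ| ∈ (0,1)` and the sequence
`(f_n)_{n ≥ 1}` satisfies the initial bounds `nᵢ(f₁) ≤ q` and the recursive
bounds `n₀(f_{n+1}) ≤ q n₀(f_n)`, `n₁(f_{n+1}) ≤ q (n₀(f_n)^δ + n₁(f_n))`,
`n₂(f_{n+1}) ≤ q (n₁(f_n)^δ + n₂(f_n))`, then
`n₀(f_n) ≤ q^n`, `n₁(f_n) ≤ B q^{nδ}`, `n₂(f_n) ≤ C max{B^δ,1} q^{nδ²}` with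
`B = q^{1-δ}/(1-q^{1-δ})`, `C = q^{1-δ²}/(1-q^{1-δ²})`; and if `n₂` dominates
the Banach norm then `Σ f_n` converges. -/
theorem abstract_iteration_bounds
    {X : Type*} [NormedAddCommGroup X] [NormedSpace ℝ X] [CompleteSpace X]
    (n0 n1 n2 : X → ℝ) (Q lam δ q : ℝ)
    (hQ : 1 ≤ Q) (hq_def : q = Q * |lam|) (hq0 : 0 < q) (hq1 : q < 1)
    (hδ0 : 0 < δ) (hδ1 : δ < 1)
    (f : ℕ → X)
    (h0nonneg : ∀ x, 0 ≤ n0 x)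
    (h01 : ∀ x, n0 x ≤ n1 x) (h12 : ∀ x, n1 x ≤ n2 x)
    (hinit0 : n0 (f 1) ≤ q) (hinit1 : n1 (f 1) ≤ q) (hinit2 : n2 (f 1) ≤ q)
    (hrec0 : ∀ n ≥ 1, n0 (f (n + 1)) ≤ q * n0 (f n))
    (hrec1 : ∀ n ≥ 1, n1 (f (n + 1)) ≤ q * ((n0 (f n)) ^ δ + n1 (f n)))
    (hrec2 : ∀ n ≥ 1, n2 (f (n + 1)) ≤ q * ((n1 (f n)) ^ δ + n2 (f n))) :
    (∀ n ≥ 1, n0 (f n) ≤ q ^ (n : ℝ)) ∧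
    (∀ n ≥ 1, n1 (f n) ≤ (q ^ (1 - δ) / (1 - q ^ (1 - δ))) * q ^ ((n : ℝ) * δ)) ∧
    (∀ n ≥ 1, n2 (f n) ≤
      (q ^ (1 - δ ^ 2) / (1 - q ^ (1 - δ ^ 2))) *
        max ((q ^ (1 - δ) / (1 - q ^ (1 - δ))) ^ δ) 1 * q ^ ((n : ℝ) * δ ^ 2)) ∧
    ((∀ x, ‖x‖ ≤ n2 x) → Summable f) := by
  have hδ2_0 : (0:ℝ) < δ ^ 2 := by positivity
  have hδ2_1 : δ ^ 2 < 1 := by nlinarith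
  set b := q ^ (1 - δ) with hbdef
  set c := q ^ (1 - δ ^ 2) with hcdef
  have hb0 : 0 < b := Real.rpow_pos_of_pos hq0 _
  have hb1 : b < 1 := Real.rpow_lt_one hq0.le hq1 (by linarith)
  have hc0 : 0 < c := Real.rpow_pos_of_pos hq0 _
  have hc1 : c < 1 := Real.rpow_lt_one hq0.le hq1 (by linarith)
  set B := b / (1 - b) with hBdef
  set C := c / (1 - c) with hCdef
  have hB0 : 0 < B := div_pos hb0 (by linarith)
  have hC0 : 0 < C := div_pos hc0 (by linarith)
  have hqb : b * q ^ δ = q := by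
    rw [hbdef, ← Real.rpow_add hq0]
    norm_num
  have hqc : c * q ^ (δ ^ 2 : ℝ) = q := by
    rw [hcdef, ← Real.rpow_add hq0]
    norm_num
  have hbne : (1:ℝ) - b ≠ 0 := by linarith
  have hcne : (1:ℝ) - c ≠ 0 := by linarith
  have hBkey : q * (1 + B) = B * q ^ δ := by
    rw [hBdef, div_mul_eq_mul_div, hqb]
    field_simp
    ring
  have hCkey : q * (1 + C) = C * q ^ (δ ^ 2 : ℝ) := by
    rw [hCdef, div_mul_eq_mul_div, hqc]
    field_simp
    ring
  set M := max (B ^ δ) 1 with hMdef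
  have hM1 : (1:ℝ) ≤ M := le_max_right _ _
  have hMB : B ^ δ ≤ M := le_max_left _ _
  -- claim 0
  have key0 : ∀ n ≥ 1, n0 (f n) ≤ q ^ (n : ℝ) := by
    intro n hn
    induction n, hn using Nat.le_induction with
    | base => simpa using hinit0
    | succ n hn ih =>
      calc n0 (f (n + 1)) ≤ q * n0 (f n) := hrec0 n hn
        _ ≤ q * q ^ (n : ℝ) := by
            exact mul_le_mul_of_nonneg_left ih hq0.le
        _ = q ^ ((n + 1 : ℕ) : ℝ) := by
            push_cast
            rw [Real.rpow_add hq0, Real.rpow_one]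
            ring
  -- claim 1
  have key1 : ∀ n ≥ 1, n1 (f n) ≤ B * q ^ ((n : ℝ) * δ) := by
    intro n hn
    induction n, hn using Nat.le_induction with
    | base =>
      have hBq : B * q ^ (((1:ℕ) : ℝ) * δ) = q / (1 - b) := by
        push_cast
        rw [one_mul, hBdef, div_mul_eq_mul_div, hqb]
      rw [hBq]
      have : q * (1 - b) ≤ q := by nlinarith
      calc n1 (f 1) ≤ q := hinit1
        _ ≤ q / (1 - b) := by
            rw [le_div_iff₀ (by linarith)]
            nlinarith
    | succ n hn ih =>
      have hpow : (n0 (f n)) ^ δ ≤ q ^ ((n : ℝ) * δ) := by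
        rw [Real.rpow_mul hq0.le]
        exact Real.rpow_le_rpow (h0nonneg _) (key0 n hn) hδ0.le
      have hX : (0:ℝ) ≤ q ^ ((n : ℝ) * δ) := (Real.rpow_pos_of_pos hq0 _).le
      calc n1 (f (n + 1)) ≤ q * ((n0 (f n)) ^ δ + n1 (f n)) := hrec1 n hn
        _ ≤ q * (q ^ ((n : ℝ) * δ) + B * q ^ ((n : ℝ) * δ)) := by
            apply mul_le_mul_of_nonneg_left _ hq0.le
            exact add_le_add hpow ih
        _ = (q * (1 + B)) * q ^ ((n : ℝ) * δ) := by ring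
        _ = B * (q ^ ((n : ℝ) * δ) * q ^ δ) := by rw [hBkey]; ring
        _ = B * q ^ (((n + 1 : ℕ) : ℝ) * δ) := by
            rw [← Real.rpow_add hq0]
            push_cast
            ring_nf
  -- claim 2
  have key2 : ∀ n ≥ 1, n2 (f n) ≤ C * M * q ^ ((n : ℝ) * δ ^ 2) := by
    intro n hn
    induction n, hn using Nat.le_induction with
    | base =>
      have hCq : C * q ^ (((1:ℕ) : ℝ) * (δ ^ 2)) = q / (1 - c) := by
        push_cast
        rw [one_mul, hCdef, div_mul_eq_mul_div, hqc]
      have hq2 : (0:ℝ) < q ^ (((1:ℕ) : ℝ) * (δ ^ 2)) := Real.rpow_pos_of_pos hq0 _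
      have hstep : q ≤ C * q ^ (((1:ℕ) : ℝ) * (δ ^ 2)) := by
        rw [hCq, le_div_iff₀ (by linarith)]
        nlinarith
      calc n2 (f 1) ≤ q := hinit2
        _ ≤ C * q ^ (((1:ℕ) : ℝ) * (δ ^ 2)) := hstep
        _ ≤ C * M * q ^ (((1:ℕ) : ℝ) * (δ ^ 2)) := by nlinarith
    | succ n hn ih =>
      have hX : (0:ℝ) < q ^ ((n : ℝ) * δ ^ 2) := Real.rpow_pos_of_pos hq0 _
      have hpow : (n1 (f n)) ^ δ ≤ M * q ^ ((n : ℝ) * δ ^ 2) := by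
        have h1 : (n1 (f n)) ^ δ ≤ (B * q ^ ((n : ℝ) * δ)) ^ δ := by
          apply Real.rpow_le_rpow _ (key1 n hn) hδ0.le
          exact (h0nonneg _).trans (h01 _)
        have h2 : (B * q ^ ((n : ℝ) * δ)) ^ δ = B ^ δ * q ^ ((n : ℝ) * δ ^ 2) := by
          rw [Real.mul_rpow hB0.le (Real.rpow_pos_of_pos hq0 _).le,
            ← Real.rpow_mul hq0.le]
          congr 1
          ring
        have h3 : B ^ δ * q ^ ((n : ℝ) * δ ^ 2) ≤ M * q ^ ((n : ℝ) * δ ^ 2) :=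
          mul_le_mul_of_nonneg_right hMB hX.le
        calc (n1 (f n)) ^ δ ≤ B ^ δ * q ^ ((n : ℝ) * δ ^ 2) := h2 ▸ h1
          _ ≤ M * q ^ ((n : ℝ) * δ ^ 2) := h3
      calc n2 (f (n + 1)) ≤ q * ((n1 (f n)) ^ δ + n2 (f n)) := hrec2 n hn
        _ ≤ q * (M * q ^ ((n : ℝ) * δ ^ 2) + C * M * q ^ ((n : ℝ) * δ ^ 2)) := by
            apply mul_le_mul_of_nonneg_left _ hq0.le
            exact add_le_add hpow ih
        _ = (q * (1 + C)) * M * q ^ ((n : ℝ) * δ ^ 2) := by ring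
        _ = C * M * (q ^ ((n : ℝ) * δ ^ 2) * q ^ (δ ^ 2 : ℝ)) := by rw [hCkey]; ring
        _ = C * M * q ^ (((n + 1 : ℕ) : ℝ) * δ ^ 2) := by
            rw [← Real.rpow_add hq0]
            push_cast
            ring_nf
  refine ⟨key0, key1, key2, ?_⟩
  intro hdom
  set r := q ^ (δ ^ 2 : ℝ) with hrdef
  have hr0 : 0 < r := Real.rpow_pos_of_pos hq0 _
  have hr1 : r < 1 := Real.rpow_lt_one hq0.le hq1 hδ2_0
  rw [← summable_nat_add_iff 1]
  apply Summable.of_norm_bounded (g := fun n => (C * M * r) * r ^ n)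
    ((summable_geometric_of_lt_one hr0.le hr1).mul_left _)
  intro n
  have h1 : ‖f (n + 1)‖ ≤ C * M * q ^ (((n + 1 : ℕ) : ℝ) * δ ^ 2) :=
    (hdom _).trans (key2 (n + 1) (Nat.le_add_left 1 n))
  have h2 : q ^ (((n + 1 : ℕ) : ℝ) * δ ^ 2) = r * r ^ n := by
    have hrn : r ^ n = q ^ ((n : ℝ) * δ ^ 2) := by
      rw [← Real.rpow_natCast r n, hrdef, ← Real.rpow_mul hq0.le, mul_comm]
    rw [hrn, hrdef, ← Real.rpow_add hq0]
    push_cast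
    ring_nf
  calc ‖f (n + 1)‖ ≤ C * M * q ^ (((n + 1 : ℕ) : ℝ) * δ ^ 2) := h1
    _ = C * M * r * r ^ n := by rw [h2]; ring
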